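/- Let n ≥ 3, let 1/(n−1) < u < 1, and set u' = ((n−1)u − 1)/(n−2). Let f : ℝ^{n-2} × ℝ → ℂ be a Schwartz function and for y ≠ 0 define h(y) = ∫_ℝ (1+s²)^{-(n-1)u/2} f(y, |y|·s) ds. Then for every x ∈ ℝ^{n-2}, both integrals below converge absolutely and ∫_{ℝ^{n-2}} |y|^{-(n-2)u'} h(y) e^{-2πi⟨x,y⟩} dy = ∫_{ℝ^{n-2} × ℝ} (|y|² + s²)^{-(n-1)u/2} f(y,s) e^{-2πi⟨x,y⟩} dy ds. -/

import Mathlib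

open MeasureTheory Real Set
open scoped RealInnerProductSpace


lemma integrableOn_norm_rpow_neg_ball {E : Type*} [NormedAddCommGroup E] [NormedSpace ℝ E]
    [MeasurableSpace E] [BorelSpace E] [FiniteDimensional ℝ E]
    (μ : Measure E) [μ.IsAddHaarMeasure] {r : ℝ} (h0 : 0 < r)
    (hr : r < Module.finrank ℝ E) :
    IntegrableOn (fun x : E => ‖x‖ ^ (-r)) (Metric.ball (0 : E) 1) μ := by
  have hd : (0:ℝ) < Module.finrank ℝ E := lt_of_le_of_lt h0.le hr
  have hmeas : Measurable fun x : E => ‖x‖ ^ (-r) := by fun_prop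
  refine ⟨hmeas.aestronglyMeasurable.restrict, ?_⟩
  rw [HasFiniteIntegral,
    lintegral_enorm_of_nonneg (fun x => rpow_nonneg (norm_nonneg x) _),
    lintegral_eq_lintegral_meas_le _
      (Filter.Eventually.of_forall fun x => rpow_nonneg (norm_nonneg x) _)
      hmeas.aemeasurable]
  set ν := μ.restrict (Metric.ball (0:E) 1)
  have hsub : ∀ t : ℝ, 0 < t →
      {a : E | t ≤ ‖a‖ ^ (-r)} ⊆ Metric.closedBall 0 (t ^ (-r⁻¹)) := by
    intro t ht a ha
    simp only [mem_setOf_eq] at ha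
    rcases eq_or_ne a 0 with rfl | h0a
    · simp only [norm_zero] at ha
      rw [Real.zero_rpow (neg_ne_zero.2 h0.ne')] at ha
      linarith
    · have hna : 0 < ‖a‖ := norm_pos_iff.2 h0a
      rw [mem_closedBall_zero_iff]
      calc ‖a‖ = (‖a‖ ^ (-r)) ^ (-r⁻¹) := by
            rw [← Real.rpow_mul (norm_nonneg a), neg_mul_neg,
              mul_inv_cancel₀ (ne_of_gt h0), Real.rpow_one]
        _ ≤ t ^ (-r⁻¹) := Real.rpow_le_rpow_of_nonpos ht ha (neg_nonpos.2 (inv_nonneg.2 h0.le))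
  calc (∫⁻ t in Ioi (0:ℝ), ν {a : E | t ≤ ‖a‖ ^ (-r)})
      ≤ ∫⁻ t in Ioc (0:ℝ) 1 ∪ Ioi 1, ν {a : E | t ≤ ‖a‖ ^ (-r)} :=
        lintegral_mono_set Ioi_subset_Ioc_union_Ioi
    _ ≤ (∫⁻ t in Ioc (0:ℝ) 1, ν {a : E | t ≤ ‖a‖ ^ (-r)}) +
        ∫⁻ t in Ioi (1:ℝ), ν {a : E | t ≤ ‖a‖ ^ (-r)} := lintegral_union_le _ _ _
    _ < ⊤ := by
        refine ENNReal.add_lt_top.2 ⟨?_, ?_⟩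
        · calc (∫⁻ t in Ioc (0:ℝ) 1, ν {a : E | t ≤ ‖a‖ ^ (-r)})
              ≤ ∫⁻ _ in Ioc (0:ℝ) 1, μ (Metric.ball (0:E) 1) := by
                refine setLIntegral_mono' measurableSet_Ioc fun t ht => ?_
                exact le_trans (measure_mono (subset_univ _))
                  (le_of_eq (Measure.restrict_apply_univ _))
            _ < ⊤ := by
                rw [setLIntegral_const]
                exact ENNReal.mul_lt_top measure_ball_lt_top (by simp [Real.volume_Ioc])
        · calc (∫⁻ t in Ioi (1:ℝ), ν {a : E | t ≤ ‖a‖ ^ (-r)})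
              ≤ ∫⁻ t in Ioi (1:ℝ),
                  ENNReal.ofReal (t ^ (-(Module.finrank ℝ E / r))) * μ (Metric.ball (0:E) 1) := by
                refine setLIntegral_mono' measurableSet_Ioi fun t ht => ?_
                have ht1 : (1:ℝ) < t := ht
                have ht0 : (0:ℝ) < t := lt_trans one_pos ht1
                refine le_trans (le_trans (Measure.restrict_le_self _) (measure_mono (hsub t ht0)))
                  (le_of_eq ?_)
                rw [Measure.addHaar_closedBall μ 0 (by positivity : (0:ℝ) ≤ t ^ (-r⁻¹))]
                congr 2
                rw [← Real.rpow_natCast (t ^ (-r⁻¹)) _, ← Real.rpow_mul ht0.le]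
                congr 1
                field_simp
            _ < ⊤ := by
                rw [lintegral_mul_const' _ _ measure_ball_lt_top.ne]
                refine ENNReal.mul_lt_top ?_ measure_ball_lt_top
                refine IntegrableOn.setLIntegral_lt_top ?_
                refine integrableOn_Ioi_rpow_of_lt ?_ one_pos
                rw [neg_lt_neg_iff, lt_div_iff₀ h0, one_mul]
                exact hr

set_option maxHeartbeats 1000000 in
/-- Proposition 3.7 of the paper in concrete form: `A_H ∘ J* = res ∘ A_G`, i.e. the weighted
Fourier transform of `h = J*f` on `ℝ^{n-2}` agrees with the weighted Fourier transform of `f`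
on `ℝ^{n-1}` restricted to frequencies in `ℝ^{n-2}`. -/
theorem adjoint_is_restriction (n : ℕ) (hn : 3 ≤ n) (u : ℝ)
    (hu1 : 1 / ((n : ℝ) - 1) < u) (hu2 : u < 1)
    (u' : ℝ) (hu' : u' = (((n : ℝ) - 1) * u - 1) / ((n : ℝ) - 2))
    (f : SchwartzMap (EuclideanSpace ℝ (Fin (n - 2)) × ℝ) ℂ)
    (h : EuclideanSpace ℝ (Fin (n - 2)) → ℂ)
    (hh : ∀ y : EuclideanSpace ℝ (Fin (n - 2)), y ≠ 0 →
      h y = ∫ s : ℝ, (((1 + s ^ 2) ^ (-(((n : ℝ) - 1) * u / 2)) : ℝ) : ℂ) * f (y, ‖y‖ * s)) :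
    ∀ x : EuclideanSpace ℝ (Fin (n - 2)),
      Integrable (fun y : EuclideanSpace ℝ (Fin (n - 2)) =>
          ((‖y‖ ^ (-(((n : ℝ) - 2) * u')) : ℝ) : ℂ) * h y *
            Complex.exp (-(2 * (π : ℂ) * Complex.I * ((⟪x, y⟫ : ℝ) : ℂ)))) ∧
      Integrable (fun p : EuclideanSpace ℝ (Fin (n - 2)) × ℝ =>
          (((‖p.1‖ ^ 2 + p.2 ^ 2) ^ (-(((n : ℝ) - 1) * u / 2)) : ℝ) : ℂ) * f p *
            Complex.exp (-(2 * (π : ℂ) * Complex.I * ((⟪x, p.1⟫ : ℝ) : ℂ)))) ∧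
      ∫ y : EuclideanSpace ℝ (Fin (n - 2)),
          ((‖y‖ ^ (-(((n : ℝ) - 2) * u')) : ℝ) : ℂ) * h y *
            Complex.exp (-(2 * (π : ℂ) * Complex.I * ((⟪x, y⟫ : ℝ) : ℂ)))
        = ∫ p : EuclideanSpace ℝ (Fin (n - 2)) × ℝ,
            (((‖p.1‖ ^ 2 + p.2 ^ 2) ^ (-(((n : ℝ) - 1) * u / 2)) : ℝ) : ℂ) * f p *
              Complex.exp (-(2 * (π : ℂ) * Complex.I * ((⟪x, p.1⟫ : ℝ) : ℂ))) := by
  intro x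
  have hn2 : (2 : ℝ) < (n : ℝ) := by
    have : (3 : ℝ) ≤ (n : ℝ) := by exact_mod_cast hn
    linarith
  set a : ℝ := ((n : ℝ) - 1) * u / 2 with ha_def
  set b : ℝ := ((n : ℝ) - 2) * u' with hb_def
  have ha1 : 1 < 2 * a := by
    have h1 : (0 : ℝ) < (n : ℝ) - 1 := by linarith
    have h2 : 1 < u * ((n : ℝ) - 1) := (div_lt_iff₀ h1).1 hu1
    have h3 : u * ((n : ℝ) - 1) = ((n : ℝ) - 1) * u := mul_comm _ _
    rw [ha_def]; linarith
  have ha0 : 0 < a := by linarith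
  have h2a : 2 * a < (n : ℝ) - 1 := by
    rw [ha_def]
    nlinarith
  have hne2 : (n : ℝ) - 2 ≠ 0 := by linarith
  have hkey : b = 2 * a - 1 := by
    rw [hb_def, hu', ha_def, mul_comm ((n : ℝ) - 2), div_mul_cancel₀ _ hne2]
    ring
  have hfr : ((Module.finrank ℝ (EuclideanSpace ℝ (Fin (n - 2)) × ℝ) : ℕ) : ℝ)
      = (n : ℝ) - 1 := by
    rw [Module.finrank_prod, finrank_euclideanSpace_fin, Module.finrank_self]
    have : ((n - 2 : ℕ) : ℝ) = (n : ℝ) - 2 := by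
      have : (2 : ℕ) ≤ n := by omega
      push_cast [Nat.cast_sub this]
      ring
    push_cast
    rw [this]
    ring
  -- the function on the product space
  set F : EuclideanSpace ℝ (Fin (n - 2)) × ℝ → ℂ := fun p =>
      (((‖p.1‖ ^ 2 + p.2 ^ 2) ^ (-a) : ℝ) : ℂ) * f p *
        Complex.exp (-(2 * (π : ℂ) * Complex.I * ((⟪x, p.1⟫ : ℝ) : ℂ))) with hF_def
  set w : EuclideanSpace ℝ (Fin (n - 2)) × ℝ → ℝ := fun p =>
      (‖p.1‖ ^ 2 + p.2 ^ 2) ^ (-a) with hw_def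
  have hw0 : ∀ p, 0 ≤ w p := fun p => Real.rpow_nonneg (by positivity) _
  have hwle : ∀ p : EuclideanSpace ℝ (Fin (n - 2)) × ℝ, w p ≤ ‖p‖ ^ (-(2 * a)) := by
    intro p
    rcases eq_or_ne p 0 with rfl | hp
    · have h1 : (-a : ℝ) ≠ 0 := (neg_lt_zero.2 ha0).ne
      have h2 : (-(2*a) : ℝ) ≠ 0 := by simp; positivity
      simp [hw_def, Real.zero_rpow h1, Real.zero_rpow h2]
    · have hpn : 0 < ‖p‖ := norm_pos_iff.2 hp
      have hsq : ‖p‖ ^ 2 ≤ ‖p.1‖ ^ 2 + p.2 ^ 2 := by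
        have h2 : ‖p‖ = max ‖p.1‖ ‖p.2‖ := rfl
        have h4 : ‖p.2‖ = |p.2| := Real.norm_eq_abs _
        rcases max_cases ‖p.1‖ ‖p.2‖ with ⟨h5, h6⟩ | ⟨h5, h6⟩ <;> rw [h2, h5] <;>
          nlinarith [sq_abs p.2, norm_nonneg p.1, abs_nonneg p.2, sq_nonneg p.2]
      calc w p ≤ (‖p‖ ^ 2) ^ (-a) :=
            Real.rpow_le_rpow_of_nonpos (by positivity) hsq (neg_nonpos.2 ha0.le)
        _ = ‖p‖ ^ (-(2 * a)) := by
            rw [← Real.rpow_natCast ‖p‖ 2, ← Real.rpow_mul (norm_nonneg p)]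
            norm_num
  obtain ⟨C, hCpos, hC⟩ := f.decay 0 0
  have hCf : ∀ p, ‖f p‖ ≤ C := by
    intro p
    have := hC p
    simpa [norm_iteratedFDeriv_zero] using this
  have hFnorm : ∀ p, ‖F p‖ = w p * ‖f p‖ := by
    intro p
    have hre : (-(2 * (π : ℂ) * Complex.I * ((⟪x, p.1⟫ : ℝ) : ℂ))).re = 0 := by simp
    rw [hF_def]
    simp only [norm_mul]
    rw [Complex.norm_exp, hre, Real.exp_zero, mul_one,
      Complex.norm_real, Real.norm_eq_abs, abs_of_nonneg (hw0 p)]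
  haveI : (volume : Measure (EuclideanSpace ℝ (Fin (n - 2)) × ℝ)).IsAddHaarMeasure := by
    rw [Measure.volume_eq_prod]; infer_instance
  have hmeasF : AEStronglyMeasurable F volume := by
    have h1 : Measurable fun p : EuclideanSpace ℝ (Fin (n - 2)) × ℝ =>
        ((‖p.1‖ ^ 2 + p.2 ^ 2) ^ (-a) : ℝ) := by
      exact ((measurable_fst.norm.pow_const 2).add
        (measurable_snd.pow_const 2)).pow_const (-a)
    have h2 : Continuous fun p : EuclideanSpace ℝ (Fin (n - 2)) × ℝ =>
        Complex.exp (-(2 * (π : ℂ) * Complex.I * ((⟪x, p.1⟫ : ℝ) : ℂ))) := by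
      refine Complex.continuous_exp.comp (Continuous.neg ?_)
      exact continuous_const.mul (Complex.continuous_ofReal.comp
        (Continuous.inner continuous_const continuous_fst))
    exact ((Complex.measurable_ofReal.comp h1).aestronglyMeasurable.mul
      f.continuous.measurable.aestronglyMeasurable).mul h2.aestronglyMeasurable
  have hball : IntegrableOn F (Metric.ball (0 : EuclideanSpace ℝ (Fin (n - 2)) × ℝ) 1) := by
    have hi : IntegrableOn (fun p : EuclideanSpace ℝ (Fin (n - 2)) × ℝ => ‖p‖ ^ (-(2 * a)))
        (Metric.ball 0 1) volume :=
      integrableOn_norm_rpow_neg_ball volume (by linarith) (by rw [hfr]; exact h2a)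
    refine Integrable.mono' (hi.const_mul C) hmeasF.restrict (ae_of_all _ fun p => ?_)
    rw [hFnorm p]
    calc w p * ‖f p‖ ≤ ‖p‖ ^ (-(2 * a)) * C :=
          mul_le_mul (hwle p) (hCf p) (norm_nonneg _) (Real.rpow_nonneg (norm_nonneg _) _)
      _ = C * ‖p‖ ^ (-(2 * a)) := mul_comm _ _
  have hcompl : IntegrableOn F
      (Metric.ball (0 : EuclideanSpace ℝ (Fin (n - 2)) × ℝ) 1)ᶜ := by
    refine Integrable.mono' (f.integrable.norm.integrableOn) hmeasF.restrict ?_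
    rw [ae_restrict_iff' measurableSet_ball.compl]
    refine ae_of_all _ fun p hp => ?_
    have h1p : 1 ≤ ‖p‖ := by
      simp only [Set.mem_compl_iff, Metric.mem_ball, dist_zero_right, not_lt] at hp
      exact hp
    rw [hFnorm p]
    have hwp1 : w p ≤ 1 :=
      (hwle p).trans (Real.rpow_le_one_of_one_le_of_nonpos h1p (by linarith))
    calc w p * ‖f p‖ ≤ 1 * ‖f p‖ := mul_le_mul_of_nonneg_right hwp1 (norm_nonneg _)
      _ = ‖f p‖ := one_mul _
  have hF : Integrable F := by
    rw [← integrableOn_univ,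
      ← Set.union_compl_self (Metric.ball (0 : EuclideanSpace ℝ (Fin (n - 2)) × ℝ) 1)]
    exact hball.union hcompl
  -- pointwise identity via change of variables
  have hstep : ∀ y : EuclideanSpace ℝ (Fin (n - 2)), y ≠ 0 →
      ((‖y‖ ^ (-b) : ℝ) : ℂ) * h y *
          Complex.exp (-(2 * (π : ℂ) * Complex.I * ((⟪x, y⟫ : ℝ) : ℂ)))
        = ∫ s : ℝ, F (y, s) := by
    intro y hy
    have hc : 0 < ‖y‖ := norm_pos_iff.2 hy
    set c : ℝ := ‖y‖ with hc_def
    set e : ℂ := Complex.exp (-(2 * (π : ℂ) * Complex.I * ((⟪x, y⟫ : ℝ) : ℂ))) with he_def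
    have key : ∫ s : ℝ, F (y, s)
        = (∫ s : ℝ, (((c ^ 2 + s ^ 2) ^ (-a) : ℝ) : ℂ) * f (y, s)) * e := by
      rw [← integral_mul_const]
    have hcv := MeasureTheory.Measure.integral_comp_mul_left
      (fun t : ℝ => (((c ^ 2 + t ^ 2) ^ (-a) : ℝ) : ℂ) * f (y, t)) c
    have hpt : ∀ s : ℝ, (((c ^ 2 + (c * s) ^ 2) ^ (-a) : ℝ) : ℂ) * f (y, c * s)
        = (((c ^ 2) ^ (-a) : ℝ) : ℂ) * ((((1 + s ^ 2) ^ (-a) : ℝ) : ℂ) * f (y, c * s)) := by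
      intro s
      rw [← mul_assoc, ← Complex.ofReal_mul, ← Real.mul_rpow (by positivity) (by positivity)]
      congr 3
      ring
    simp only [hpt] at hcv
    rw [integral_const_mul, ← hh y hy] at hcv
    have habs : c * |c⁻¹| = 1 := by
      rw [abs_of_pos (inv_pos.2 hc), mul_inv_cancel₀ hc.ne']
    have hint : (∫ t : ℝ, (((c ^ 2 + t ^ 2) ^ (-a) : ℝ) : ℂ) * f (y, t))
        = c • ((((c ^ 2) ^ (-a) : ℝ) : ℂ) * h y) := by
      rw [hcv, smul_smul, habs, one_smul]
    rw [key, hint]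
    congr 1
    rw [Complex.real_smul, ← mul_assoc, ← Complex.ofReal_mul]
    congr 2
    rw [← Real.rpow_natCast c 2, ← Real.rpow_mul hc.le,
      show -b = 1 + ((2 : ℕ) : ℝ) * (-a) by push_cast; rw [hkey]; ring,
      Real.rpow_add hc, Real.rpow_one]
  -- a.e. version
  haveI : Nonempty (Fin (n - 2)) := ⟨⟨0, by omega⟩⟩
  have hne : ∀ᵐ y : EuclideanSpace ℝ (Fin (n - 2)), y ≠ 0 := by
    refine ae_iff.2 ?_
    have hs : {y : EuclideanSpace ℝ (Fin (n - 2)) | ¬ y ≠ 0} = {0} := by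
      ext z; simp
    rw [hs]
    exact measure_singleton 0
  have haeeq : (fun y : EuclideanSpace ℝ (Fin (n - 2)) =>
        ((‖y‖ ^ (-b) : ℝ) : ℂ) * h y *
          Complex.exp (-(2 * (π : ℂ) * Complex.I * ((⟪x, y⟫ : ℝ) : ℂ))))
      =ᵐ[volume] fun y => ∫ s : ℝ, F (y, s) :=
    hne.mono fun y hy => hstep y hy
  have hFp : Integrable F ((volume : Measure (EuclideanSpace ℝ (Fin (n - 2)))).prod volume) := by
    rwa [← Measure.volume_eq_prod]
  refine ⟨hFp.integral_prod_left.congr haeeq.symm, hF, ?_⟩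
  calc (∫ y : EuclideanSpace ℝ (Fin (n - 2)),
        ((‖y‖ ^ (-b) : ℝ) : ℂ) * h y *
          Complex.exp (-(2 * (π : ℂ) * Complex.I * ((⟪x, y⟫ : ℝ) : ℂ))))
      = ∫ y : EuclideanSpace ℝ (Fin (n - 2)), ∫ s : ℝ, F (y, s) := integral_congr_ae haeeq
    _ = ∫ p : EuclideanSpace ℝ (Fin (n - 2)) × ℝ, F p := by
        rw [Measure.volume_eq_prod]
        exact (integral_prod F hFp).symm
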